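/- Let ω be an irrational real number with continued fraction convergents p_n/q_n. Then limsup_{k→∞} (-ln ‖kω‖)/k = limsup_{n→∞} (ln q_{n+1})/q_n, where ‖x‖ denotes the distance from x to the nearest integer. -/

import Mathlib

open Filter

/-- Distance from a real number to the nearest integer. -/
noncomputable def distToInt (x : ℝ) : ℝ := |x - round x|

namespace CFLimsupAux

open GenContFract

variable {ω : ℝ}

lemma not_term (hω : Irrational ω) (n : ℕ) : ¬(GenContFract.of ω).TerminatedAt n := by
  intro h
  rcases (GenContFract.terminates_iff_rat ω).1 ⟨n, h⟩ with ⟨q, hq⟩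
  exact hω ⟨q, hq.symm⟩

lemma exists_s (hω : Irrational ω) (n : ℕ) :
    ∃ gp, (GenContFract.of ω).s.get? n = some gp :=
  Option.ne_none_iff_exists'.1 (not_term hω n)

lemma exists_stream (hω : Irrational ω) (n : ℕ) :
    ∃ ifp, IntFractPair.stream ω n = some ifp ∧ 0 < ifp.fr := by
  have h1 : IntFractPair.stream ω (n+1) ≠ none := by
    intro h
    exact not_term hω n (of_terminatedAt_n_iff_succ_nth_intFractPair_stream_eq_none.2 h)
  obtain ⟨ifp1, h1⟩ := Option.ne_none_iff_exists'.1 h1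
  obtain ⟨ifp, hs, hfr, -⟩ := IntFractPair.succ_nth_stream_eq_some_iff.1 h1
  exact ⟨ifp, hs, lt_of_le_of_ne (IntFractPair.nth_stream_fr_nonneg hs) (Ne.symm hfr)⟩

lemma one_le_dens (hω : Irrational ω) (n : ℕ) : (1:ℝ) ≤ (GenContFract.of ω).dens n := by
  have h := succ_nth_fib_le_of_nth_den (K := ℝ) (v := ω) (n := n) (Or.inr (not_term hω _))
  refine le_trans ?_ h
  have : 1 ≤ Nat.fib (n+1) := Nat.fib_pos.2 n.succ_pos
  exact_mod_cast this

lemma dens_pos (hω : Irrational ω) (n : ℕ) : (0:ℝ) < (GenContFract.of ω).dens n :=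
  lt_of_lt_of_le one_pos (one_le_dens hω n)

lemma dens_mono : Monotone ((GenContFract.of ω).dens) :=
  monotone_nat_of_le_succ (fun _ => of_den_mono)

lemma dens_add_le (hω : Irrational ω) (n : ℕ) :
    (GenContFract.of ω).dens (n+1) + (GenContFract.of ω).dens n ≤
      (GenContFract.of ω).dens (n+2) := by
  obtain ⟨gp, hgp⟩ := exists_s hω (n+1)
  have hrec := dens_recurrence hgp rfl rfl
  have ha : gp.a = 1 := of_partNum_eq_one (partNum_eq_s_a hgp)
  rw [ha, one_mul] at hrec
  have hb : (1:ℝ) ≤ gp.b := of_one_le_get?_partDen (partDen_eq_s_b hgp)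
  nlinarith [one_le_dens hω (n+1)]

lemma exists_int_num_den (hω : Irrational ω) (n : ℕ) :
    (∃ a : ℤ, ((a:ℝ) = (GenContFract.of ω).nums n)) ∧
      ∃ b : ℤ, ((b:ℝ) = (GenContFract.of ω).dens n) := by
  induction n using Nat.strong_induction_on with
  | _ n IH =>
  match n with
  | 0 =>
      refine ⟨⟨⌊ω⌋, ?_⟩, ⟨1, ?_⟩⟩
      · rw [zeroth_num_eq_h, of_h_eq_floor]
      · rw [zeroth_den_eq_one]; norm_num
  | 1 =>
      obtain ⟨gp, hgp⟩ := exists_s hω 0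
      obtain ⟨ha, z, hz⟩ := of_partNum_eq_one_and_exists_int_partDen_eq hgp
      refine ⟨⟨z * ⌊ω⌋ + 1, ?_⟩, ⟨z, ?_⟩⟩
      · rw [first_num_eq hgp, ha, of_h_eq_floor, hz]; push_cast; ring
      · rw [first_den_eq hgp, hz]
  | (n+2) =>
      obtain ⟨⟨pa, hpa⟩, ⟨pb, hpb⟩⟩ := IH n (by omega)
      obtain ⟨⟨qa, hqa⟩, ⟨qb, hqb⟩⟩ := IH (n+1) (by omega)
      obtain ⟨gp, hgp⟩ := exists_s hω (n+1)
      obtain ⟨ha, z, hz⟩ := of_partNum_eq_one_and_exists_int_partDen_eq hgp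
      have hnum := nums_recurrence hgp rfl rfl
      have hden := dens_recurrence hgp rfl rfl
      refine ⟨⟨z * qa + pa, ?_⟩, ⟨z * qb + pb, ?_⟩⟩
      · rw [hnum, ha, hz, ← hqa, ← hpa]; push_cast; ring
      · rw [hden, ha, hz, ← hqb, ← hpb]; push_cast; ring

/-- Integer numerators. -/
noncomputable def Az (hω : Irrational ω) (n : ℕ) : ℤ := (exists_int_num_den hω n).1.choose

/-- Integer denominators. -/
noncomputable def Bz (hω : Irrational ω) (n : ℕ) : ℤ := (exists_int_num_den hω n).2.choose

lemma Az_eq (hω : Irrational ω) (n : ℕ) : ((Az hω n : ℝ)) = (GenContFract.of ω).nums n :=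
  (exists_int_num_den hω n).1.choose_spec

lemma Bz_eq (hω : Irrational ω) (n : ℕ) : ((Bz hω n : ℝ)) = (GenContFract.of ω).dens n :=
  (exists_int_num_den hω n).2.choose_spec

lemma one_le_Bz (hω : Irrational ω) (n : ℕ) : 1 ≤ Bz hω n := by
  have := one_le_dens hω n
  rw [← Bz_eq hω n] at this
  exact_mod_cast this

/-- Natural number denominators. -/
noncomputable def QN (hω : Irrational ω) (n : ℕ) : ℕ := (Bz hω n).toNat

lemma QN_eq (hω : Irrational ω) (n : ℕ) : ((QN hω n : ℝ)) = (GenContFract.of ω).dens n := by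
  rw [← Bz_eq hω n]
  norm_cast
  exact Int.toNat_of_nonneg (le_trans zero_le_one (one_le_Bz hω n))

lemma one_le_QN (hω : Irrational ω) (n : ℕ) : 1 ≤ QN hω n := by
  have h := one_le_Bz hω n
  unfold QN
  omega

/-- The error term `εₙ = Bₙ ω - Aₙ`. -/
noncomputable def eps (ω : ℝ) (n : ℕ) : ℝ :=
  (GenContFract.of ω).dens n * ω - (GenContFract.of ω).nums n

lemma eps_eq (hω : Irrational ω) (n : ℕ) :
    eps ω n = (GenContFract.of ω).dens n * (ω - (GenContFract.of ω).convs n) := by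
  have h0 : (GenContFract.of ω).dens n ≠ 0 := (dens_pos hω n).ne'
  rw [eps, conv_eq_num_div_den, mul_sub, mul_div_assoc', mul_div_cancel_left₀ _ h0]

lemma sign_eps (hω : Irrational ω) (n : ℕ) : 0 < (-1:ℝ)^n * eps ω n := by
  obtain ⟨ifp, hst, hfr⟩ := exists_stream hω n
  have h := sub_convs_eq hst
  simp only [if_neg hfr.ne'] at h
  have hB : (0:ℝ) < ((GenContFract.of ω).contsAux (n+1)).b := by
    have := dens_pos hω n
    rwa [den_eq_conts_b, nth_cont_eq_succ_nth_contAux] at this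
  have hpB : (0:ℝ) ≤ ((GenContFract.of ω).contsAux n).b := zero_le_of_contsAux_b
  have hfri : (0:ℝ) < ifp.fr⁻¹ := inv_pos.2 hfr
  have hD : 0 < ((GenContFract.of ω).contsAux (n+1)).b *
      (ifp.fr⁻¹ * ((GenContFract.of ω).contsAux (n+1)).b + ((GenContFract.of ω).contsAux n).b) := by
    positivity
  have hsq : (-1:ℝ)^n * (-1:ℝ)^n = 1 := by
    rw [← pow_add, ← two_mul, pow_mul]; norm_num
  have h2 : 0 < (-1:ℝ)^n * (ω - (GenContFract.of ω).convs n) := by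
    rw [h, mul_div_assoc']
    apply div_pos _ hD
    rw [hsq]; norm_num
  rw [eps_eq hω n]
  calc (0:ℝ) < (GenContFract.of ω).dens n * ((-1:ℝ)^n * (ω - (GenContFract.of ω).convs n)) :=
        mul_pos (dens_pos hω n) h2
    _ = (-1:ℝ)^n * ((GenContFract.of ω).dens n * (ω - (GenContFract.of ω).convs n)) := by ring

lemma eps_ne (hω : Irrational ω) (n : ℕ) : eps ω n ≠ 0 := by
  intro h
  have := sign_eps hω n
  rw [h, mul_zero] at this
  exact lt_irrefl _ this

lemma abs_eps_le (hω : Irrational ω) (n : ℕ) :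
    |eps ω n| ≤ 1 / (GenContFract.of ω).dens (n+1) := by
  have h := abs_sub_convs_le (not_term hω n)
  have hBpos := dens_pos hω n
  have hB1pos := dens_pos hω (n+1)
  rw [eps_eq hω n, abs_mul, abs_of_pos hBpos]
  calc (GenContFract.of ω).dens n * |ω - (GenContFract.of ω).convs n|
      ≤ (GenContFract.of ω).dens n *
        (1 / ((GenContFract.of ω).dens n * (GenContFract.of ω).dens (n+1))) := by
        exact mul_le_mul_of_nonneg_left h hBpos.le
    _ = 1 / (GenContFract.of ω).dens (n+1) := by field_simp
 
lemma det_real (hω : Irrational ω) (n : ℕ) :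
    (GenContFract.of ω).nums n * (GenContFract.of ω).dens (n+1) -
      (GenContFract.of ω).dens n * (GenContFract.of ω).nums (n+1) = (-1:ℝ)^(n+1) :=
  SimpContFract.determinant (s := SimpContFract.of ω) (not_term hω n)

lemma det_int (hω : Irrational ω) (n : ℕ) :
    Az hω n * Bz hω (n+1) - Bz hω n * Az hω (n+1) = (-1:ℤ)^(n+1) := by
  have h := det_real hω n
  rw [← Az_eq hω n, ← Az_eq hω (n+1), ← Bz_eq hω n, ← Bz_eq hω (n+1)] at h
  exact_mod_cast h

lemma key_identity (hω : Irrational ω) (n : ℕ) :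
    (GenContFract.of ω).dens (n+1) * eps ω n - (GenContFract.of ω).dens n * eps ω (n+1)
      = (-1:ℝ)^n := by
  have h := det_real hω n
  simp only [eps]
  nlinarith [h, pow_succ (-1:ℝ) n]

lemma abs_eps_sum (hω : Irrational ω) (n : ℕ) :
    (GenContFract.of ω).dens (n+1) * |eps ω n| +
      (GenContFract.of ω).dens n * |eps ω (n+1)| = 1 := by
  have h1 := sign_eps hω n
  have h2 := sign_eps hω (n+1)
  have key := key_identity hω n
  have hsq : (-1:ℝ)^n * (-1:ℝ)^n = 1 := by
    rw [← pow_add, ← two_mul, pow_mul]; norm_num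
  have e1 : |eps ω n| = (-1:ℝ)^n * eps ω n := by
    rw [← abs_of_pos h1, abs_mul, abs_pow, abs_neg, abs_one, one_pow, one_mul]
  have e2 : |eps ω (n+1)| = (-1:ℝ)^(n+1) * eps ω (n+1) := by
    rw [← abs_of_pos h2, abs_mul, abs_pow, abs_neg, abs_one, one_pow, one_mul]
  rw [e1, e2]
  calc (GenContFract.of ω).dens (n+1) * ((-1:ℝ)^n * eps ω n) +
        (GenContFract.of ω).dens n * ((-1:ℝ)^(n+1) * eps ω (n+1))
      = (-1:ℝ)^n * ((GenContFract.of ω).dens (n+1) * eps ω n -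
          (GenContFract.of ω).dens n * eps ω (n+1)) := by rw [pow_succ]; ring
    _ = (-1:ℝ)^n * (-1:ℝ)^n := by rw [key]
    _ = 1 := hsq

lemma eps_lower (hω : Irrational ω) (n : ℕ) :
    1 / (2 * (GenContFract.of ω).dens (n+1)) ≤ |eps ω n| := by
  have hsum := abs_eps_sum hω n
  have hle := abs_eps_le hω (n+1)
  have h2B : 2 * (GenContFract.of ω).dens n ≤ (GenContFract.of ω).dens (n+2) := by
    have := dens_add_le hω n
    have := dens_mono (ω := ω) (Nat.le_succ n)
    linarith
  have hB2 := dens_pos hω (n+2)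
  have hB1 := dens_pos hω (n+1)
  have hB0 := dens_pos hω n
  have h3 : (GenContFract.of ω).dens n * |eps ω (n+1)| ≤ 1/2 := by
    calc (GenContFract.of ω).dens n * |eps ω (n+1)|
        ≤ (GenContFract.of ω).dens n * (1 / (GenContFract.of ω).dens (n+2)) :=
          mul_le_mul_of_nonneg_left hle hB0.le
      _ ≤ 1/2 := by
          rw [mul_one_div, div_le_div_iff₀ hB2 (by norm_num)]
          linarith
  have h4 : 1/2 ≤ (GenContFract.of ω).dens (n+1) * |eps ω n| := by linarith
  rw [div_le_iff₀ (by positivity : (0:ℝ) < 2 * (GenContFract.of ω).dens (n+1))]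
  nlinarith

lemma best_approx (hω : Irrational ω) (n : ℕ) (k p : ℤ) (hk1 : 1 ≤ k)
    (hk2 : (k:ℝ) < (GenContFract.of ω).dens (n+1)) :
    |eps ω n| ≤ |(k:ℝ) * ω - p| := by
  have hdet := det_int hω n
  set a : ℤ := (-1:ℤ)^n * (k * Az hω (n+1) - p * Bz hω (n+1)) with ha_def
  set b : ℤ := (-1:ℤ)^n * (p * Bz hω n - k * Az hω n) with hb_def
  have hsqz : (-1:ℤ)^n * (-1:ℤ)^n = 1 := by
    rw [← pow_add, ← two_mul, pow_mul]; norm_num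
  have hk : a * Bz hω n + b * Bz hω (n+1) = k := by
    rw [ha_def, hb_def]
    linear_combination (-1 : ℤ) * (-1:ℤ)^n * k * hdet + k * hsqz
  have hp : a * Az hω n + b * Az hω (n+1) = p := by
    rw [ha_def, hb_def]
    linear_combination (-1 : ℤ) * (-1:ℤ)^n * p * hdet + p * hsqz
  have hkR : (a:ℝ) * (GenContFract.of ω).dens n + (b:ℝ) * (GenContFract.of ω).dens (n+1)
      = (k:ℝ) := by
    rw [← Bz_eq hω n, ← Bz_eq hω (n+1)]; exact_mod_cast hk
  have hpR : (a:ℝ) * (GenContFract.of ω).nums n + (b:ℝ) * (GenContFract.of ω).nums (n+1)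
      = (p:ℝ) := by
    rw [← Az_eq hω n, ← Az_eq hω (n+1)]; exact_mod_cast hp
  have hreal : (k:ℝ) * ω - p = a * eps ω n + b * eps ω (n+1) := by
    rw [← hkR, ← hpR]; simp only [eps]; ring
  have hBz1 := one_le_Bz hω n
  have hBz2 := one_le_Bz hω (n+1)
  have hkltB : k < Bz hω (n+1) := by
    have : (k:ℝ) < ((Bz hω (n+1) : ℤ) : ℝ) := by rw [Bz_eq]; exact hk2
    exact_mod_cast this
  rcases eq_or_ne b 0 with hb0 | hb0
  · -- b = 0 : k = a * Bz n, so a ≥ 1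
    rw [hb0, zero_mul, add_zero] at hk
    have ha_pos : 1 ≤ a := by
      by_contra hc
      push_neg at hc
      have hc' : a ≤ 0 := by omega
      have h1 : a * Bz hω n ≤ 0 := mul_nonpos_of_nonpos_of_nonneg hc' (by linarith)
      linarith
    rw [hreal, hb0]
    push_cast
    rw [zero_mul, add_zero, abs_mul]
    have h1 : (1:ℝ) ≤ |(a:ℝ)| := by
      rw [abs_of_pos (by exact_mod_cast ha_pos : (0:ℝ) < (a:ℝ))]
      exact_mod_cast ha_pos
    nlinarith [abs_nonneg (eps ω n)]
  · -- b ≠ 0 : a and b have opposite signs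
    have hab : a * b < 0 := by
      rcases lt_or_gt_of_ne hb0 with hbneg | hbpos
      · -- b < 0; need a > 0
        have hble : b ≤ -1 := by omega
        have hapos : 0 < a := by
          by_contra hc
          push_neg at hc
          have h1 : a * Bz hω n ≤ 0 := mul_nonpos_of_nonpos_of_nonneg hc (by linarith)
          have h2 : b * Bz hω (n+1) ≤ -Bz hω (n+1) := by nlinarith
          linarith
        exact mul_neg_of_pos_of_neg hapos hbneg
      · -- b > 0; need a < 0
        have hble : 1 ≤ b := hbpos
        have haneg : a < 0 := by
          by_contra hc
          push_neg at hc
          have h1 : 0 ≤ a * Bz hω n := mul_nonneg hc (by linarith)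
          have h2 : Bz hω (n+1) ≤ b * Bz hω (n+1) := by nlinarith
          linarith
        exact mul_neg_of_neg_of_pos haneg hbpos
    have ha0 : a ≠ 0 := by
      intro h; rw [h, zero_mul] at hab; exact lt_irrefl _ hab
    have ha1 : (1:ℝ) ≤ |(a:ℝ)| := by
      have : 1 ≤ |a| := Int.one_le_abs ha0
      calc (1:ℝ) = ((1:ℤ):ℝ) := by norm_num
        _ ≤ ((|a|:ℤ):ℝ) := by exact_mod_cast this
        _ = |(a:ℝ)| := by push_cast; ring
    -- ε n and ε (n+1) have opposite signs
    have hee : eps ω n * eps ω (n+1) < 0 := by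
      have h1 := sign_eps hω n
      have h2 := sign_eps hω (n+1)
      have hsq : (-1:ℝ)^n * (-1:ℝ)^n = 1 := by
        rw [← pow_add, ← two_mul, pow_mul]; norm_num
      have h3 : 0 < ((-1:ℝ)^n * eps ω n) * ((-1:ℝ)^(n+1) * eps ω (n+1)) := mul_pos h1 h2
      have h4 : ((-1:ℝ)^n * eps ω n) * ((-1:ℝ)^(n+1) * eps ω (n+1))
          = -(eps ω n * eps ω (n+1)) := by
        rw [pow_succ]
        linear_combination (-(eps ω n * eps ω (n+1))) * hsq
      linarith [h3, h4.symm ▸ h3]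
    have hsame : 0 < ((a:ℝ) * eps ω n) * ((b:ℝ) * eps ω (n+1)) := by
      have habR : ((a:ℝ)) * (b:ℝ) < 0 := by exact_mod_cast hab
      have := mul_pos_of_neg_of_neg habR hee
      nlinarith [this]
    rw [hreal]
    have habs : |(a:ℝ) * eps ω n| ≤ |(a:ℝ) * eps ω n + (b:ℝ) * eps ω (n+1)| := by
      rcases lt_trichotomy ((a:ℝ) * eps ω n) 0 with hx | hx | hx
      · have hy : (b:ℝ) * eps ω (n+1) < 0 := by
          by_contra hc
          push_neg at hc
          nlinarith [mul_nonpos_of_nonpos_of_nonneg hx.le hc]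
        rw [abs_of_neg hx, abs_of_neg (by linarith : (a:ℝ) * eps ω n + (b:ℝ) * eps ω (n+1) < 0)]
        linarith
      · rw [hx, zero_mul] at hsame; exact absurd hsame (lt_irrefl 0)
      · have hy : 0 < (b:ℝ) * eps ω (n+1) := by
          by_contra hc
          push_neg at hc
          nlinarith [mul_nonneg hx.le (neg_nonneg.2 hc)]
        rw [abs_of_pos hx, abs_of_pos (by linarith : 0 < (a:ℝ) * eps ω n + (b:ℝ) * eps ω (n+1))]
        linarith
    calc |eps ω n| ≤ |(a:ℝ)| * |eps ω n| := by nlinarith [abs_nonneg (eps ω n)]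
      _ = |(a:ℝ) * eps ω n| := (abs_mul _ _).symm
      _ ≤ _ := habs

lemma distToInt_pos (hω : Irrational ω) (k : ℕ) (hk : k ≠ 0) :
    0 < distToInt ((k:ℝ) * ω) := by
  have hirr : Irrational ((k:ℝ) * ω) := hω.natCast_mul hk
  have hne : (k:ℝ) * ω - (round ((k:ℝ)*ω) : ℤ) ≠ 0 :=
    sub_ne_zero.2 (hirr.ne_int _)
  exact abs_pos.2 hne

lemma dist_lower (hω : Irrational ω) (n : ℕ) (k : ℕ) (hk1 : 1 ≤ k)
    (hk2 : (k:ℝ) < (GenContFract.of ω).dens (n+1)) :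
    1 / (2 * (GenContFract.of ω).dens (n+1)) ≤ distToInt ((k:ℝ) * ω) := by
  have hba := best_approx hω n (k:ℤ) (round ((k:ℝ)*ω))
    (by exact_mod_cast hk1) (by push_cast; exact hk2)
  push_cast at hba
  rw [distToInt]
  exact le_trans (eps_lower hω n) hba

lemma Bz_mono (hω : Irrational ω) : Monotone (Bz hω) := by
  intro m n h
  have hd := dens_mono (ω := ω) h
  rw [← Bz_eq hω m, ← Bz_eq hω n] at hd
  exact_mod_cast hd

lemma QN_mono (hω : Irrational ω) : Monotone (QN hω) := fun m n h =>
  Int.toNat_le_toNat (Bz_mono hω h)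

lemma QN_growth (hω : Irrational ω) (m : ℕ) : m + 1 ≤ QN hω (2*m) := by
  induction m with
  | zero => simpa using one_le_QN hω 0
  | succ m IH =>
    have h1 : (GenContFract.of ω).dens (2*m) + 1 ≤ (GenContFract.of ω).dens (2*m+2) := by
      have ha := dens_add_le hω (2*m)
      have hb := one_le_dens hω (2*m+1)
      linarith
    have h2 : Bz hω (2*m) + 1 ≤ Bz hω (2*m+2) := by
      rw [← Bz_eq hω (2*m), ← Bz_eq hω (2*m+2)] at h1
      exact_mod_cast h1
    have h3 : QN hω (2*m) + 1 ≤ QN hω (2*m+2) := by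
      have ha := one_le_Bz hω (2*m)
      have hb := one_le_Bz hω (2*m+2)
      show (Bz hω (2*m)).toNat + 1 ≤ (Bz hω (2*m+2)).toNat
      omega
    have h2m : 2 * (m+1) = 2*m+2 := by ring
    rw [h2m]
    omega

lemma tendsto_QN (hω : Irrational ω) : Tendsto (QN hω) atTop atTop :=
  tendsto_atTop_atTop_of_monotone (QN_mono hω)
    (fun b => ⟨2*b, by have := QN_growth hω b; omega⟩)

end CFLimsupAux

open CFLimsupAux GenContFract

theorem limsup_log_dens_eq_beta (ω : ℝ) (hω : Irrational ω) :
    limsup (fun k : ℕ =>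
        ((-Real.log (distToInt (k * ω)) / k : ℝ) : EReal)) atTop =
      limsup (fun n : ℕ =>
        ((Real.log ((GenContFract.of ω).dens (n + 1)) /
            (GenContFract.of ω).dens n : ℝ) : EReal)) atTop := by
  classical
  apply le_antisymm
  · -- limsup over k ≤ limsup over n
    apply le_of_forall_gt_imp_ge_of_dense
    intro c hc
    obtain ⟨c₂, hc₂l, hc₂r⟩ := EReal.exists_between_coe_real hc
    obtain ⟨c₁, hc₁l, hc₁r⟩ := EReal.exists_between_coe_real hc₂l
    have hc₁r' : c₁ < c₂ := by exact_mod_cast hc₁r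
    have hev : ∀ᶠ n : ℕ in atTop,
        ((Real.log ((GenContFract.of ω).dens (n + 1)) /
            (GenContFract.of ω).dens n : ℝ) : EReal) < (c₁ : EReal) :=
      eventually_lt_of_limsup_lt hc₁l
    obtain ⟨N₀, hN₀⟩ := eventually_atTop.1 hev
    set δ := c₂ - c₁ with hδ
    have hδpos : 0 < δ := by linarith
    set N := max N₀ (2 * ⌈Real.log 2 / δ⌉₊) with hN
    have hdensN : Real.log 2 / δ ≤ (GenContFract.of ω).dens N := by
      calc Real.log 2 / δ ≤ (⌈Real.log 2 / δ⌉₊ : ℝ) := Nat.le_ceil _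
        _ ≤ (⌈Real.log 2 / δ⌉₊ : ℝ) + 1 := by linarith
        _ ≤ (QN hω (2 * ⌈Real.log 2 / δ⌉₊) : ℝ) := by exact_mod_cast QN_growth hω _
        _ = (GenContFract.of ω).dens (2 * ⌈Real.log 2 / δ⌉₊) := QN_eq hω _
        _ ≤ (GenContFract.of ω).dens N := dens_mono (le_max_right _ _)
    have hlog2N : Real.log 2 / (GenContFract.of ω).dens N ≤ δ := by
      rw [div_le_iff₀ (dens_pos hω N)]
      rw [div_le_iff₀ hδpos] at hdensN
      linarith
    have hev2 : ∀ᶠ k : ℕ in atTop,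
        ((-Real.log (distToInt (k * ω)) / k : ℝ) : EReal) ≤ (c₂ : EReal) := by
      rw [eventually_atTop]
      refine ⟨QN hω (N+1), fun k hk => ?_⟩
      have hk1 : 1 ≤ k := le_trans (one_le_QN hω (N+1)) hk
      have hex : ∃ m, k < QN hω m := ⟨2*(k+1), by have := QN_growth hω (k+1); omega⟩
      have hMlt : k < QN hω (Nat.find hex) := Nat.find_spec hex
      have hM0 : Nat.find hex ≠ 0 := by
        intro h0
        have h1 : QN hω 0 ≤ QN hω (N+1) := QN_mono hω (Nat.zero_le _)
        rw [h0] at hMlt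
        omega
      obtain ⟨n, hn⟩ : ∃ n, Nat.find hex = n + 1 := ⟨Nat.find hex - 1, by omega⟩
      rw [hn] at hMlt
      have hQn : QN hω n ≤ k := by
        by_contra hcon
        push_neg at hcon
        exact Nat.find_min hex (by omega) hcon
      have hNn : N < n := by
        by_contra hcon
        push_neg at hcon
        have h1 : QN hω (n+1) ≤ QN hω (N+1) := QN_mono hω (by omega)
        omega
      have hkR : (GenContFract.of ω).dens n ≤ (k:ℝ) := by
        rw [← QN_eq hω n]; exact_mod_cast hQn
      have hkR2 : (k:ℝ) < (GenContFract.of ω).dens (n+1) := by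
        rw [← QN_eq hω (n+1)]; exact_mod_cast hMlt
      have hdlow := dist_lower hω n k hk1 hkR2
      have hB1 := dens_pos hω (n+1)
      have hB0 := dens_pos hω n
      have h2B : (0:ℝ) < 2 * (GenContFract.of ω).dens (n+1) := by linarith
      have hdpos : 0 < distToInt ((k:ℝ) * ω) :=
        lt_of_lt_of_le (by positivity) hdlow
      have hinv : (distToInt ((k:ℝ)*ω))⁻¹ ≤ 2 * (GenContFract.of ω).dens (n+1) := by
        have h1 : 1 ≤ distToInt ((k:ℝ)*ω) * (2 * (GenContFract.of ω).dens (n+1)) := by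
          rw [div_le_iff₀ h2B] at hdlow
          linarith
        rw [inv_eq_one_div, div_le_iff₀ hdpos]
        nlinarith
      have hlog : -Real.log (distToInt ((k:ℝ)*ω)) ≤
          Real.log (2 * (GenContFract.of ω).dens (n+1)) := by
        rw [← Real.log_inv]
        exact (Real.log_le_log_iff (inv_pos.2 hdpos) h2B).2 hinv
      have hnum0 : 0 ≤ Real.log (2 * (GenContFract.of ω).dens (n+1)) :=
        Real.log_nonneg (by nlinarith [one_le_dens hω (n+1)])
      have hkpos : (0:ℝ) < (k:ℝ) := by exact_mod_cast hk1
      have hABs : -Real.log (distToInt ((k:ℝ)*ω)) / (k:ℝ) ≤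
          Real.log (2 * (GenContFract.of ω).dens (n+1)) / (GenContFract.of ω).dens n := by
        calc -Real.log (distToInt ((k:ℝ)*ω)) / (k:ℝ)
            ≤ Real.log (2 * (GenContFract.of ω).dens (n+1)) / (k:ℝ) :=
              (div_le_div_iff_of_pos_right hkpos).2 hlog
          _ ≤ _ := div_le_div_of_nonneg_left hnum0 hB0 hkR
      have hsplit : Real.log (2 * (GenContFract.of ω).dens (n+1)) =
          Real.log 2 + Real.log ((GenContFract.of ω).dens (n+1)) :=
        Real.log_mul two_ne_zero hB1.ne'
      have hvn : Real.log ((GenContFract.of ω).dens (n+1)) / (GenContFract.of ω).dens n < c₁ := by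
        have h1 := hN₀ n (by omega : N₀ ≤ n)
        exact_mod_cast h1
      have hlog2 : Real.log 2 / (GenContFract.of ω).dens n ≤ δ := by
        refine le_trans ?_ hlog2N
        exact div_le_div_of_nonneg_left (Real.log_nonneg one_le_two) (dens_pos hω N)
          (dens_mono (by omega : N ≤ n))
      have hfinal : -Real.log (distToInt ((k:ℝ)*ω)) / (k:ℝ) ≤ c₂ := by
        calc -Real.log (distToInt ((k:ℝ)*ω)) / (k:ℝ)
            ≤ Real.log (2 * (GenContFract.of ω).dens (n+1)) / (GenContFract.of ω).dens n := hABs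
          _ = Real.log 2 / (GenContFract.of ω).dens n +
              Real.log ((GenContFract.of ω).dens (n+1)) / (GenContFract.of ω).dens n := by
              rw [hsplit, add_div]
          _ ≤ δ + c₁ := by linarith
          _ = c₂ := by rw [hδ]; ring
      exact_mod_cast EReal.coe_le_coe_iff.2 hfinal
    exact le_trans (limsup_le_of_le (by isBoundedDefault) hev2) hc₂r.le
  · -- limsup over n ≤ limsup over k
    have key : ∀ n : ℕ,
        ((Real.log ((GenContFract.of ω).dens (n + 1)) /
            (GenContFract.of ω).dens n : ℝ) : EReal) ≤
          ((-Real.log (distToInt ((QN hω n : ℕ) * ω)) / (QN hω n : ℕ) : ℝ) : EReal) := by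
      intro n
      apply EReal.coe_le_coe_iff.2
      have hB1 := dens_pos hω (n+1)
      have hd_le : distToInt ((QN hω n : ℝ) * ω) ≤ 1 / (GenContFract.of ω).dens (n+1) := by
        calc distToInt ((QN hω n : ℝ) * ω) ≤ |(QN hω n : ℝ) * ω - (Az hω n : ℝ)| :=
              round_le _ _
          _ = |eps ω n| := by rw [QN_eq hω n, Az_eq hω n]; rfl
          _ ≤ 1 / (GenContFract.of ω).dens (n+1) := abs_eps_le hω n
      have hd_pos : 0 < distToInt ((QN hω n : ℝ) * ω) :=
        distToInt_pos hω _ (by have := one_le_QN hω n; omega)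
      have hlog : Real.log ((GenContFract.of ω).dens (n+1)) ≤
          -Real.log (distToInt ((QN hω n : ℝ) * ω)) := by
        have h1 := (Real.log_le_log_iff hd_pos (by positivity)).2 hd_le
        rw [one_div, Real.log_inv] at h1
        linarith
      have hQpos : (0:ℝ) < (QN hω n : ℝ) := by
        rw [QN_eq hω n]; exact dens_pos hω n
      calc Real.log ((GenContFract.of ω).dens (n+1)) / (GenContFract.of ω).dens n
          = Real.log ((GenContFract.of ω).dens (n+1)) / (QN hω n : ℝ) := by
            rw [QN_eq hω n]
        _ ≤ -Real.log (distToInt ((QN hω n : ℝ) * ω)) / (QN hω n : ℝ) :=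
            (div_le_div_iff_of_pos_right hQpos).2 hlog
    calc limsup (fun n : ℕ =>
          ((Real.log ((GenContFract.of ω).dens (n + 1)) /
              (GenContFract.of ω).dens n : ℝ) : EReal)) atTop
        ≤ limsup (fun n : ℕ =>
            ((-Real.log (distToInt ((QN hω n : ℕ) * ω)) / (QN hω n : ℕ) : ℝ) : EReal)) atTop :=
          limsup_le_limsup (Eventually.of_forall key)
      _ = limsup (fun k : ℕ => ((-Real.log (distToInt (k * ω)) / k : ℝ) : EReal))
            (map (QN hω) atTop) :=
          limsup_comp (fun k : ℕ => ((-Real.log (distToInt (k * ω)) / k : ℝ) : EReal))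
            (QN hω) atTop
      _ ≤ limsup (fun k : ℕ => ((-Real.log (distToInt (k * ω)) / k : ℝ) : EReal)) atTop :=
          limsup_le_limsup_of_le (tendsto_QN hω)
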